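/- The map d̃_SP(e) := C-collapse of (e^+)^- is a bijection from the set of special type-D partitions of size 2n onto the set of metaplectic special partitions of size 2n. -/

import Mathlib

/-!
Partitions (Young diagrams) are represented as antitone, eventually-zero
functions `f : ℕ → ℕ`, where `f i` is the length of the `(i+1)`-st row.
-/

/-- `f : ℕ → ℕ` represents a partition (Young diagram). -/
def IsPartition (f : ℕ → ℕ) : Prop :=
  Antitone f ∧ ∃ N, ∀ i, N ≤ i → f i = 0

/-- The size of a partition: the sum of its parts. -/
noncomputable def size (f : ℕ → ℕ) : ℕ := ∑' i, f i

/-- The sum of the `k` largest parts of a partition. -/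
def psum (f : ℕ → ℕ) (k : ℕ) : ℕ := ∑ i ∈ Finset.range k, f i

/-- The multiplicity with which `p` occurs as a part. -/
noncomputable def mult (f : ℕ → ℕ) (p : ℕ) : ℕ := {i | f i = p}.ncard

/-- The transpose (conjugate) partition: `transpose f i` is the length of the
`(i+1)`-st column of `f`. -/
noncomputable def transpose (f : ℕ → ℕ) : ℕ → ℕ := fun i => {j | i < f j}.ncard

/-- The number of parts of a partition (the length of its first column). -/
noncomputable def numParts (f : ℕ → ℕ) : ℕ := {j | 0 < f j}.ncard

/-- Type B: odd size, and every (positive) even part occurs with even multiplicity. -/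
def IsTypeB (f : ℕ → ℕ) : Prop :=
  IsPartition f ∧ Odd (size f) ∧ ∀ p, 0 < p → Even p → Even (mult f p)

/-- Type C: even size, and every odd part occurs with even multiplicity. -/
def IsTypeC (f : ℕ → ℕ) : Prop :=
  IsPartition f ∧ Even (size f) ∧ ∀ p, Odd p → Even (mult f p)

/-- Type D: even size, and every (positive) even part occurs with even multiplicity. -/
def IsTypeD (f : ℕ → ℕ) : Prop :=
  IsPartition f ∧ Even (size f) ∧ ∀ p, 0 < p → Even p → Even (mult f p)

/-- Dominance order `f ≼ g` between partitions of the same size. -/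
def Dom (f g : ℕ → ℕ) : Prop :=
  size f = size g ∧ ∀ k, psum f k ≤ psum g k

/-- `c` is the X-collapse of `d`, where predicate `T` expresses "type X": `c` is
the greatest type-X partition of the same size dominated by `d`. -/
def IsCollapse (T : (ℕ → ℕ) → Prop) (d c : ℕ → ℕ) : Prop :=
  T c ∧ Dom c d ∧ ∀ e, T e → Dom e d → Dom e c

open Classical in
/-- The X-collapse of `d` (junk value if it does not exist). -/
noncomputable def collapse (T : (ℕ → ℕ) → Prop) (d : ℕ → ℕ) : ℕ → ℕ :=
  if h : ∃ c, IsCollapse T d c then h.choose else fun _ => 0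

/-- The B-collapse. -/
noncomputable def collapseB : (ℕ → ℕ) → ℕ → ℕ := collapse IsTypeB

/-- The C-collapse. -/
noncomputable def collapseC : (ℕ → ℕ) → ℕ → ℕ := collapse IsTypeC

/-- The D-collapse. -/
noncomputable def collapseD : (ℕ → ℕ) → ℕ → ℕ := collapse IsTypeD

/-- `d⁺`: add one box to the first row. -/
def boxPlus (f : ℕ → ℕ) : ℕ → ℕ := fun i => if i = 0 then f 0 + 1 else f i

/-- `d⁻`: remove one box from the last row (for nonempty `d`). -/
noncomputable def boxMinus (f : ℕ → ℕ) : ℕ → ℕ :=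
  fun i => if i = numParts f - 1 then f i - 1 else f i

/-- `∇(d)`: remove the first column (every part decreased by 1). -/
def delCol (f : ℕ → ℕ) : ℕ → ℕ := fun i => f i - 1

/-- `∇̌(d)`: remove the first row (delete one largest part). -/
def delRow (f : ℕ → ℕ) : ℕ → ℕ := fun i => f (i + 1)

/-- The metaplectic Lusztig–Spaltenstein map: the D-collapse of the transpose. -/
noncomputable def mLS (d : ℕ → ℕ) : ℕ → ℕ := collapseD (transpose d)

/-- The map `d̃_SP`: the C-collapse of `(e⁺)⁻`. -/
noncomputable def mSP (e : ℕ → ℕ) : ℕ → ℕ := collapseC (boxMinus (boxPlus e))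

/-- The metaplectic Barbasch–Vogan duality. -/
noncomputable def mBV (d : ℕ → ℕ) : ℕ → ℕ := mSP (mLS d)
namespace Stmt4

open Finset

/-! ### Basic psum/size lemmas -/

lemma psum_succ (f : ℕ → ℕ) (k : ℕ) : psum f (k + 1) = psum f k + f k :=
  Finset.sum_range_succ f k

lemma psum_mono (f : ℕ → ℕ) {k l : ℕ} (h : k ≤ l) : psum f k ≤ psum f l := by
  unfold psum
  exact Finset.sum_le_sum_of_subset (Finset.range_subset_range.2 h)

lemma psum_ext {f g : ℕ → ℕ} (h : ∀ k, psum f k = psum g k) : f = g := by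
  funext k
  have h1 := h (k+1)
  have h2 := h k
  rw [psum_succ, psum_succ] at h1
  omega

lemma size_eq_psum {f : ℕ → ℕ} {N : ℕ} (hN : ∀ i, N ≤ i → f i = 0) :
    size f = psum f N := by
  unfold size psum
  exact tsum_eq_sum (fun i hi => hN i (by simpa using hi))

lemma psum_le_size {f : ℕ → ℕ} {N : ℕ} (hN : ∀ i, N ≤ i → f i = 0) (k : ℕ) :
    psum f k ≤ size f := by
  rw [size_eq_psum hN]
  rcases le_total k N with h | h
  · exact psum_mono f h
  · have : psum f k = psum f N := by
      unfold psum
      rw [← Finset.sum_range_add_sum_Ico f h]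
      have : ∑ i ∈ Finset.Ico N k, f i = 0 :=
        Finset.sum_eq_zero (fun i hi => hN i (Finset.mem_Ico.1 hi).1)
      omega
    omega

lemma psum_stable {f : ℕ → ℕ} {N : ℕ} (hN : ∀ i, N ≤ i → f i = 0) {k : ℕ} (h : N ≤ k) :
    psum f k = size f := by
  rw [size_eq_psum hN]
  unfold psum
  rw [← Finset.sum_range_add_sum_Ico f h]
  have : ∑ i ∈ Finset.Ico N k, f i = 0 :=
    Finset.sum_eq_zero (fun i hi => hN i (Finset.mem_Ico.1 hi).1)
  omega

lemma dom_antisymm {f g : ℕ → ℕ} (h1 : Dom f g) (h2 : Dom g f) : f = g :=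
  psum_ext (fun k => le_antisymm (h1.2 k) (h2.2 k))

lemma dom_refl (f : ℕ → ℕ) : Dom f f := ⟨rfl, fun _ => le_rfl⟩

lemma isCollapse_unique {T : (ℕ → ℕ) → Prop} {d c₁ c₂ : ℕ → ℕ}
    (h1 : IsCollapse T d c₁) (h2 : IsCollapse T d c₂) : c₁ = c₂ :=
  dom_antisymm (h2.2.2 c₁ h1.1 h1.2.1) (h1.2.2 c₂ h2.1 h2.2.1)

lemma collapse_eq {T : (ℕ → ℕ) → Prop} {d c : ℕ → ℕ} (h : IsCollapse T d c) :
    collapse T d = c := by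
  unfold collapse
  rw [dif_pos ⟨c, h⟩]
  exact isCollapse_unique (Exists.choose_spec (⟨c, h⟩ : ∃ c, IsCollapse T d c)) h

/-! ### Downward closed sets and the transpose Galois connection -/

lemma dc_eq_Iio {S : Set ℕ} {N : ℕ} (hb : ∀ x ∈ S, x < N)
    (hdc : ∀ a b : ℕ, a ≤ b → b ∈ S → a ∈ S) : S = Set.Iio S.ncard := by
  have hfin : S.Finite := Set.Finite.subset (Set.finite_Iio N) (fun x hx => hb x hx)
  ext x
  simp only [Set.mem_Iio]
  constructor
  · intro hx
    have hsub : Set.Iio (x + 1) ⊆ S := fun y hy => hdc y x (by simp only [Set.mem_Iio] at hy; omega) hx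
    have : (Set.Iio (x + 1)).ncard ≤ S.ncard := Set.ncard_le_ncard hsub hfin
    rwa [← Finset.coe_range, Set.ncard_coe_finset, Finset.card_range] at this
  · intro hx
    by_contra hxS
    have hsub : S ⊆ Set.Iio x := by
      intro y hy
      simp only [Set.mem_Iio]
      by_contra hyx
      exact hxS (hdc x y (by omega) hy)
    have : S.ncard ≤ (Set.Iio x).ncard := Set.ncard_le_ncard hsub (Set.finite_Iio x)
    rw [← Finset.coe_range, Set.ncard_coe_finset, Finset.card_range] at this
    omega

lemma lt_transpose_iff {f : ℕ → ℕ} (hf : IsPartition f) (j l : ℕ) :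
    l < transpose f j ↔ j < f l := by
  obtain ⟨N, hN⟩ := hf.2
  have key : {i | j < f i} = Set.Iio (transpose f j) := by
    apply dc_eq_Iio (N := N)
    · intro x hx
      simp only [Set.mem_setOf_eq] at hx
      by_contra h
      rw [hN x (by omega)] at hx
      omega
    · intro a b hab hb
      exact lt_of_lt_of_le hb (hf.1 hab)
  constructor
  · intro h
    have : l ∈ Set.Iio (transpose f j) := h
    rw [← key] at this
    exact this
  · intro h
    have : l ∈ {i | j < f i} := h
    rw [key] at this
    exact this

lemma transpose_le_iff {f : ℕ → ℕ} (hf : IsPartition f) (j l : ℕ) :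
    transpose f j ≤ l ↔ f l ≤ j := by
  have := lt_transpose_iff hf j l
  omega

lemma transpose_antitone {f : ℕ → ℕ} (hf : IsPartition f) : Antitone (transpose f) := by
  intro a b hab
  by_contra h
  push_neg at h
  have h1 : b < f (transpose f a) := (lt_transpose_iff hf b (transpose f a)).1 h
  have h2 : ¬ (a < f (transpose f a)) := by
    have := lt_transpose_iff hf a (transpose f a)
    omega
  omega

lemma transpose_isPartition {f : ℕ → ℕ} (hf : IsPartition f) :
    IsPartition (transpose f) := by
  constructor
  · exact transpose_antitone hf
  · refine ⟨f 0 + 1, fun j hj => ?_⟩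
    by_contra h
    have h0 : 0 < transpose f j := by omega
    have := (lt_transpose_iff hf j 0).1 h0
    have := hf.1 (Nat.zero_le 0)
    omega

lemma transpose_zero_of {f : ℕ → ℕ} (hf : IsPartition f) {j : ℕ} (hj : f 0 ≤ j) :
    transpose f j = 0 := by
  by_contra h
  have h0 : 0 < transpose f j := by omega
  have := (lt_transpose_iff hf j 0).1 h0
  omega

lemma transpose_transpose {f : ℕ → ℕ} (hf : IsPartition f) :
    transpose (transpose f) = f := by
  funext i
  show {j | i < transpose f j}.ncard = f i
  have hset : {j | i < transpose f j} = Set.Iio (f i) := by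
    ext j
    simp only [Set.mem_setOf_eq, Set.mem_Iio]
    exact lt_transpose_iff hf j i
  rw [hset, ← Finset.coe_range, Set.ncard_coe_finset, Finset.card_range]

end Stmt4
namespace Stmt4

open Finset

lemma mult_eq {f : ℕ → ℕ} (hf : IsPartition f) {p : ℕ} (hp : 1 ≤ p) :
    mult f p = transpose f (p - 1) - transpose f p := by
  unfold mult
  have hset : {i | f i = p} = Set.Iio (transpose f (p-1)) \ Set.Iio (transpose f p) := by
    ext x
    simp only [Set.mem_setOf_eq, Set.mem_diff, Set.mem_Iio]
    have h1 := lt_transpose_iff hf (p-1) x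
    have h2 := lt_transpose_iff hf p x
    omega
  rw [hset, (by ext x; simp only [Set.mem_diff, Set.mem_Iio, Set.mem_Ico]; omega : Set.Iio (transpose f (p-1)) \ Set.Iio (transpose f p) = Set.Ico (transpose f p) (transpose f (p-1))), ← Finset.coe_Ico, Set.ncard_coe_finset, Nat.card_Ico]

lemma numParts_eq_transpose (f : ℕ → ℕ) : numParts f = transpose f 0 := rfl

lemma lt_numParts_iff {f : ℕ → ℕ} (hf : IsPartition f) (l : ℕ) :
    l < numParts f ↔ 0 < f l := by
  rw [numParts_eq_transpose]
  exact lt_transpose_iff hf 0 l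

/-- counting a set bounded within `range N` -/
lemma ncard_eq_filter {P : ℕ → Prop} [DecidablePred P] {N : ℕ} (h : ∀ x, P x → x < N) :
    {i | P i}.ncard = ((Finset.range N).filter P).card := by
  rw [← Set.ncard_coe_finset]
  congr 1
  ext x
  simp only [Finset.coe_filter, Finset.mem_range, Set.mem_setOf_eq]
  exact ⟨fun hx => ⟨h x hx, hx⟩, fun hx => hx.2⟩

lemma transpose_eq_card_filter {f : ℕ → ℕ} (hf : IsPartition f) {N : ℕ}
    (hN : ∀ i, N ≤ i → f i = 0) (j : ℕ) :
    transpose f j = ((Finset.range N).filter (fun i => j < f i)).card := by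
  unfold transpose
  classical
  exact ncard_eq_filter (fun x hx => by by_contra h; rw [hN x (by omega)] at hx; omega)

lemma sum_ite_lt {a M : ℕ} (h : a ≤ M) :
    (∑ j ∈ Finset.range M, if j < a then 1 else 0) = a := by
  rw [← Finset.card_filter]
  have : (Finset.range M).filter (fun j => j < a) = Finset.range a := by
    ext x
    simp only [Finset.mem_filter, Finset.mem_range]
    omega
  rw [this, Finset.card_range]

lemma size_transpose {f : ℕ → ℕ} (hf : IsPartition f) :
    size (transpose f) = size f := by
  obtain ⟨N, hN⟩ := hf.2
  have htz : ∀ j, f 0 ≤ j → transpose f j = 0 := fun j hj => transpose_zero_of hf hj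
  rw [size_eq_psum hN, size_eq_psum htz]
  unfold psum
  classical
  have key : ∀ j, transpose f j = ∑ i ∈ Finset.range N, (if j < f i then 1 else 0) := by
    intro j
    rw [transpose_eq_card_filter hf hN j, Finset.card_filter]
  calc ∑ j ∈ Finset.range (f 0), transpose f j
      = ∑ j ∈ Finset.range (f 0), ∑ i ∈ Finset.range N, (if j < f i then 1 else 0) := by
        exact Finset.sum_congr rfl (fun j _ => key j)
    _ = ∑ i ∈ Finset.range N, ∑ j ∈ Finset.range (f 0), (if j < f i then 1 else 0) :=
        Finset.sum_comm
    _ = ∑ i ∈ Finset.range N, f i := by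
        refine Finset.sum_congr rfl (fun i _ => ?_)
        exact sum_ite_lt (hf.1 (Nat.zero_le i))

/-- The fundamental identity `psum f k = f k * k + ∑_{q ∈ [f k, Q)} tf q`. -/
lemma psum_eq_mins {f : ℕ → ℕ} (hf : IsPartition f) {Q : ℕ} (hQ : f 0 ≤ Q) (k : ℕ) :
    psum f k = f k * k + ∑ q ∈ Finset.Ico (f k) Q, transpose f q := by
  classical
  have hfk : ∀ i < k, f i ≤ f 0 := fun i _ => hf.1 (Nat.zero_le i)
  have key : ∀ i ∈ Finset.range k, f i = ∑ q ∈ Finset.range Q, (if q < f i then 1 else 0) := by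
    intro i hi
    exact (sum_ite_lt (le_trans (hf.1 (Nat.zero_le i)) hQ)).symm
  have swap : psum f k = ∑ q ∈ Finset.range Q, (min (transpose f q) k) := by
    unfold psum
    rw [Finset.sum_congr rfl key, Finset.sum_comm]
    refine Finset.sum_congr rfl (fun q _ => ?_)
    rw [← Finset.card_filter]
    have : (Finset.range k).filter (fun i => q < f i) = Finset.range (min (transpose f q) k) := by
      ext x
      simp only [Finset.mem_filter, Finset.mem_range, Nat.lt_min]
      have := lt_transpose_iff hf q x
      tauto
    rw [this, Finset.card_range]
  rw [swap]
  have hsplit : Finset.range Q = Finset.range (f k) ∪ Finset.Ico (f k) Q := by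
    rw [Finset.range_eq_Ico, Finset.range_eq_Ico]
    exact (Finset.Ico_union_Ico_eq_Ico (Nat.zero_le _) (le_trans (hf.1 (Nat.zero_le k)) hQ)).symm
  rw [hsplit, Finset.sum_union (by
    simp only [Finset.range_eq_Ico]
    exact Finset.Ico_disjoint_Ico_consecutive 0 (f k) Q)]
  congr 1
  · have hc : ∀ q ∈ Finset.range (f k), min (transpose f q) k = k := by
      intro q hq
      simp only [Finset.mem_range] at hq
      have : k < transpose f q := (lt_transpose_iff hf q k).2 hq
      omega
    rw [Finset.sum_congr rfl hc, Finset.sum_const, smul_eq_mul, Finset.card_range]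
  · refine Finset.sum_congr rfl (fun q hq => ?_)
    simp only [Finset.mem_Ico] at hq
    have : ¬ (k < transpose f q) := by
      rw [lt_transpose_iff hf q k]
      omega
    omega

end Stmt4
namespace Stmt4

open Finset

lemma psum_add_Ico (f : ℕ → ℕ) {a b : ℕ} (h : a ≤ b) :
    psum f b = psum f a + ∑ i ∈ Finset.Ico a b, f i :=
  (Finset.sum_range_add_sum_Ico f h).symm

/-- For a type C partition, even partial column sums at even indices. -/
lemma typeC_psum_transpose_even {f : ℕ → ℕ} (hf : IsTypeC f) (t : ℕ) :
    psum (transpose f) (2 * t) % 2 = 0 := by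
  induction t with
  | zero => simp [psum]
  | succ t ih =>
    have h1 : psum (transpose f) (2 * (t+1)) =
        psum (transpose f) (2*t) + transpose f (2*t) + transpose f (2*t+1) := by
      have e1 : 2 * (t+1) = (2*t+1)+1 := by ring
      rw [e1, psum_succ, psum_succ]
    have hmult : mult f (2*t+1) = transpose f (2*t) - transpose f (2*t+1) := by
      have := mult_eq hf.1 (p := 2*t+1) (by omega)
      simpa using this
    have heven : mult f (2*t+1) % 2 = 0 :=
      Nat.even_iff.1 (hf.2.2 (2*t+1) ⟨t, by ring⟩)
    have hle : transpose f (2*t+1) ≤ transpose f (2*t) :=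
      transpose_antitone hf.1 (by omega)
    omega

lemma typeD_psum_transpose_odd {f : ℕ → ℕ} (hf : IsTypeD f) (t : ℕ) :
    psum (transpose f) (2 * t + 1) % 2 = numParts f % 2 := by
  induction t with
  | zero => simp [psum_succ, psum, numParts_eq_transpose]
  | succ t ih =>
    have h1 : psum (transpose f) (2 * (t+1) + 1) =
        psum (transpose f) (2*t+1) + transpose f (2*t+1) + transpose f (2*t+2) := by
      have e1 : 2 * (t+1) + 1 = (2*t+2)+1 := by ring
      rw [e1, psum_succ]
      have e2 : 2*t+2 = (2*t+1)+1 := by ring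
      rw [e2, psum_succ]
    have hmult : mult f (2*t+2) = transpose f (2*t+1) - transpose f (2*t+2) := by
      have := mult_eq hf.1 (p := 2*t+2) (by omega)
      simpa using this
    have heven : mult f (2*t+2) % 2 = 0 :=
      Nat.even_iff.1 (hf.2.2 (2*t+2) (by omega) ⟨t+1, by ring⟩)
    have hle : transpose f (2*t+2) ≤ transpose f (2*t+1) :=
      transpose_antitone hf.1 (by omega)
    omega

lemma typeD_numParts_even {f : ℕ → ℕ} (hf : IsTypeD f) : numParts f % 2 = 0 := by
  have htz : ∀ j, f 0 ≤ j → transpose f j = 0 := fun j hj => transpose_zero_of hf.1 hj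
  have hsz : size (transpose f) = size f := size_transpose hf.1
  have hstable : psum (transpose f) (2 * (f 0) + 1) = size (transpose f) :=
    psum_stable htz (by omega)
  have := typeD_psum_transpose_odd hf (f 0)
  have hev : size f % 2 = 0 := Nat.even_iff.1 hf.2.1
  omega

lemma mul_mod_two (v k : ℕ) : (v * k) % 2 = (v % 2) * (k % 2) % 2 := Nat.mul_mod v k 2

/-- corner parity for type C: at a corner, the partial sum is even -/
lemma typeC_corner_even {f : ℕ → ℕ} (hf : IsTypeC f) {k : ℕ} (hk : 0 < k)
    (hcor : f k < f (k - 1)) : psum f k % 2 = 0 := by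
  set v := f k with hv
  have hps := psum_eq_mins hf.1 (Q := 2 * f 0) (by omega) k
  rw [← hv] at hps
  have hsplit : psum (transpose f) v + ∑ q ∈ Finset.Ico v (2 * f 0), transpose f q
      = psum (transpose f) (2 * f 0) := by
    rw [psum_add_Ico (transpose f) (show v ≤ 2 * f 0 by
      have : v ≤ f 0 := hf.1.1 (Nat.zero_le k); omega)]
  have hQ : psum (transpose f) (2 * f 0) % 2 = 0 := typeC_psum_transpose_even hf (f 0)
  have htfv : transpose f v = k := by
    have h1 : transpose f v ≤ k := (transpose_le_iff hf.1 v k).2 (le_refl v)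
    have h2 : k - 1 < transpose f v := (lt_transpose_iff hf.1 v (k-1)).2 (by omega)
    omega
  rcases Nat.even_or_odd v with he | ho
  · have hv2 : v % 2 = 0 := Nat.even_iff.1 he
    have hvk : (v * k) % 2 = 0 := by
      rw [Nat.mul_mod, hv2, zero_mul]
      rfl
    have hsv : psum (transpose f) v % 2 = 0 := by
      have : v = 2 * (v / 2) := by omega
      rw [this]
      exact typeC_psum_transpose_even hf (v / 2)
    omega
  · have hv2 : v % 2 = 1 := Nat.odd_iff.1 ho
    have hvk : (v * k) % 2 = k % 2 := by
      rw [Nat.mul_mod, hv2, one_mul]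
      omega
    have hsv1 : psum (transpose f) (v + 1) % 2 = 0 := by
      have : v + 1 = 2 * ((v+1) / 2) := by omega
      rw [this]
      exact typeC_psum_transpose_even hf ((v+1) / 2)
    have : psum (transpose f) (v+1) = psum (transpose f) v + transpose f v := psum_succ _ _
    omega

/-- corner parity for type D: at a corner, partial sum + index is even -/
lemma typeD_corner_even {f : ℕ → ℕ} (hf : IsTypeD f) {k : ℕ} (hk : 0 < k)
    (hcor : f k < f (k - 1)) : (psum f k + k) % 2 = 0 := by
  set v := f k with hv
  have hps := psum_eq_mins hf.1 (Q := 2 * f 0 + 1) (by omega) k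
  rw [← hv] at hps
  have hsplit : psum (transpose f) v + ∑ q ∈ Finset.Ico v (2 * f 0 + 1), transpose f q
      = psum (transpose f) (2 * f 0 + 1) := by
    rw [psum_add_Ico (transpose f) (show v ≤ 2 * f 0 + 1 by
      have : v ≤ f 0 := hf.1.1 (Nat.zero_le k); omega)]
  have hnp : numParts f % 2 = 0 := typeD_numParts_even hf
  have hQ : psum (transpose f) (2 * f 0 + 1) % 2 = 0 := by
    have := typeD_psum_transpose_odd hf (f 0)
    omega
  have htfv : transpose f v = k := by
    have h1 : transpose f v ≤ k := (transpose_le_iff hf.1 v k).2 (le_refl v)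
    have h2 : k - 1 < transpose f v := (lt_transpose_iff hf.1 v (k-1)).2 (by omega)
    omega
  rcases Nat.even_or_odd v with he | ho
  · have hv2 : v % 2 = 0 := Nat.even_iff.1 he
    have hvk : (v * k) % 2 = 0 := by
      rw [Nat.mul_mod, hv2, zero_mul]
      rfl
    have hsv1 : psum (transpose f) (v + 1) % 2 = 0 := by
      have : v + 1 = 2 * (v / 2) + 1 := by omega
      rw [this]
      have := typeD_psum_transpose_odd hf (v / 2)
      omega
    have : psum (transpose f) (v+1) = psum (transpose f) v + transpose f v := psum_succ _ _
    omega
  · have hv2 : v % 2 = 1 := Nat.odd_iff.1 ho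
    have hvk : (v * k) % 2 = k % 2 := by
      rw [Nat.mul_mod, hv2, one_mul]
      omega
    have hsv : psum (transpose f) v % 2 = 0 := by
      have : v = 2 * ((v-1) / 2) + 1 := by omega
      rw [this]
      have := typeD_psum_transpose_odd hf ((v-1)/2)
      omega
    omega

/-- run/corner structure used for the converse direction -/
lemma run_corners {f : ℕ → ℕ} (hf : IsPartition f) {p : ℕ} (hp : 1 ≤ p)
    (hlt : transpose f p < transpose f (p-1)) :
    (0 < transpose f p → f (transpose f p) < f (transpose f p - 1)) ∧
    f (transpose f (p-1)) < f (transpose f (p-1) - 1) ∧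
    psum f (transpose f (p-1)) =
      psum f (transpose f p) + (transpose f (p-1) - transpose f p) * p := by
  set a := transpose f p with ha
  set b := transpose f (p-1) with hb
  have hruns : ∀ i, a ≤ i → i < b → f i = p := by
    intro i h1 h2
    have hle : f i ≤ p := (transpose_le_iff hf p i).1 h1
    have hgt : p - 1 < f i := (lt_transpose_iff hf (p-1) i).1 h2
    omega
  refine ⟨?_, ?_, ?_⟩
  · intro hapos
    have h1 : f a ≤ p := (transpose_le_iff hf p a).1 (le_refl a)
    have h3 : p < f (a - 1) := (lt_transpose_iff hf p (a-1)).1 (by omega)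
    omega
  · have h1 : f b ≤ p - 1 := (transpose_le_iff hf (p-1) b).1 (le_refl b)
    have h2 : f (b-1) = p := hruns (b-1) (by omega) (by omega)
    omega
  · rw [psum_add_Ico f (le_of_lt hlt)]
    congr 1
    rw [Finset.sum_congr rfl (fun i hi => hruns i (Finset.mem_Ico.1 hi).1 (Finset.mem_Ico.1 hi).2)]
    rw [Finset.sum_const, smul_eq_mul, Nat.card_Ico]

lemma typeC_of_corners {f : ℕ → ℕ} (hf : IsPartition f) (hs : size f % 2 = 0)
    (hcor : ∀ k, 0 < k → f k < f (k-1) → psum f k % 2 = 0) : IsTypeC f := by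
  refine ⟨hf, Nat.even_iff.2 hs, fun p hp => ?_⟩
  have hp1 : 1 ≤ p := hp.pos
  rw [mult_eq hf hp1]
  set a := transpose f p with ha
  set b := transpose f (p-1) with hb
  have hab : a ≤ b := transpose_antitone hf (by omega)
  rcases eq_or_lt_of_le hab with he | hlt
  · rw [← he]
    simp
  · obtain ⟨hca, hcb, hpsum⟩ := run_corners hf hp1 hlt
    rw [← ha, ← hb] at hpsum
    have hpb : psum f b % 2 = 0 := hcor b (by omega) hcb
    have hpa : psum f a % 2 = 0 := by
      rcases Nat.eq_zero_or_pos a with h0 | hpos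
      · rw [h0]; simp [psum]
      · exact hcor a hpos (hca hpos)
    have hpodd : p % 2 = 1 := Nat.odd_iff.1 hp
    rcases Nat.even_or_odd (b - a) with he2 | ho2
    · exact he2
    · exfalso
      have hba : (b - a) % 2 = 1 := Nat.odd_iff.1 ho2
      have hprod : ((b - a) * p) % 2 = 1 := by
        rw [Nat.mul_mod, hba, hpodd]
      omega

lemma typeD_of_corners {f : ℕ → ℕ} (hf : IsPartition f) (hs : size f % 2 = 0)
    (hcor : ∀ k, 0 < k → f k < f (k-1) → (psum f k + k) % 2 = 0) : IsTypeD f := by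
  refine ⟨hf, Nat.even_iff.2 hs, fun p hppos hp => ?_⟩
  have hp1 : 1 ≤ p := hppos
  rw [mult_eq hf hp1]
  set a := transpose f p with ha
  set b := transpose f (p-1) with hb
  have hab : a ≤ b := transpose_antitone hf (by omega)
  rcases eq_or_lt_of_le hab with he | hlt
  · rw [← he]
    simp
  · obtain ⟨hca, hcb, hpsum⟩ := run_corners hf hp1 hlt
    rw [← ha, ← hb] at hpsum
    have hpb : (psum f b + b) % 2 = 0 := hcor b (by omega) hcb
    have hpa : (psum f a + a) % 2 = 0 := by
      rcases Nat.eq_zero_or_pos a with h0 | hpos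
      · rw [h0]; simp [psum]
      · exact hcor a hpos (hca hpos)
    have hpev : p % 2 = 0 := Nat.even_iff.1 hp
    have hprod : ((b - a) * p) % 2 = 0 := by
      rw [Nat.mul_mod, hpev, mul_zero]
      rfl
    rw [Nat.even_iff]
    omega

end Stmt4
namespace Stmt4

open Finset

/-- A special type D partition of size 2n (the domain of the bijection). -/
def Special (n : ℕ) (e : ℕ → ℕ) : Prop :=
  IsTypeD e ∧ IsTypeC (transpose e) ∧ size e = 2 * n

/-- Row-pair parity condition characterizing `IsTypeC (transpose e)`. -/
lemma special_pair {n : ℕ} {e : ℕ → ℕ} (hs : Special n e) :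
    ∀ i, i % 2 = 0 → e i % 2 = e (i + 1) % 2 := by
  intro i hi
  have hp : IsPartition e := hs.1.1
  have htp : IsPartition (transpose e) := transpose_isPartition hp
  have hmult := mult_eq htp (p := i + 1) (by omega)
  rw [transpose_transpose hp] at hmult
  simp only [Nat.add_sub_cancel] at hmult
  have heven : (e i - e (i + 1)) % 2 = 0 := by
    have h := hs.2.1.2.2 (i+1) (by rw [Nat.odd_iff]; omega)
    rw [hmult] at h
    exact Nat.even_iff.1 h
  have hle : e (i+1) ≤ e i := hp.1 (by omega)
  omega

lemma special_e_zero {n : ℕ} {e : ℕ → ℕ} (hs : Special n e) {l : ℕ}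
    (h : numParts e ≤ l) : e l = 0 := by
  have := lt_numParts_iff hs.1.1 l
  omega

lemma special_e_pos {n : ℕ} {e : ℕ → ℕ} (hs : Special n e) {l : ℕ}
    (h : l < numParts e) : 0 < e l := (lt_numParts_iff hs.1.1 l).1 h

lemma special_Y_even {n : ℕ} {e : ℕ → ℕ} (hs : Special n e) {k : ℕ} (h : k % 2 = 0) :
    psum e k % 2 = 0 := by
  have main : ∀ t, psum e (2 * t) % 2 = 0 := by
    intro t
    induction t with
    | zero => simp [psum]
    | succ t ih =>
      have h1 : psum e (2 * (t+1)) = psum e (2*t) + e (2*t) + e (2*t+1) := by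
        have : 2 * (t+1) = (2*t+1)+1 := by ring
        rw [this, psum_succ, psum_succ]
      have := special_pair hs (2*t) (by omega)
      omega
  have : k = 2 * (k / 2) := by omega
  rw [this]
  exact main (k / 2)

lemma special_Y_odd {n : ℕ} {e : ℕ → ℕ} (hs : Special n e) {k : ℕ} (h : k % 2 = 1) :
    psum e k % 2 = e (k - 1) % 2 := by
  have h1 : psum e k = psum e (k-1) + e (k-1) := by
    have : k = (k-1) + 1 := by omega
    rw [this, psum_succ]
    congr 1 <;> omega
  have := special_Y_even hs (k := k - 1) (by omega)
  omega

/-! ### The explicit collapse -/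

/-- `chiE e k`: position `k` is an "odd row of odd length". -/
def chiE (e : ℕ → ℕ) (k : ℕ) : Prop :=
  k % 2 = 1 ∧ e (k - 1) % 2 = 1 ∧ k < numParts e

/-- `chi e k`: position `k` is spanned by a constant stretch between two odd-odd rows. -/
def chi (e : ℕ → ℕ) (k : ℕ) : Prop :=
  ∃ i j, i ≤ k ∧ k ≤ j ∧ chiE e i ∧ chiE e j ∧ ∀ t, i < t → t ≤ j → e (t - 1) = e (j - 1)

open Classical in
/-- indicator of `chi`. -/
noncomputable def ind (e : ℕ → ℕ) (k : ℕ) : ℕ := if chi e k then 1 else 0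

/-- partial sums of the collapse. -/
noncomputable def Pf (e : ℕ → ℕ) (k : ℕ) : ℕ := psum e k + ind e k

/-- the explicit collapse of `(e⁺)⁻`. -/
noncomputable def gam (e : ℕ → ℕ) : ℕ → ℕ := fun k => Pf e (k + 1) - Pf e k

lemma ind_le_one (e : ℕ → ℕ) (k : ℕ) : ind e k ≤ 1 := by
  unfold ind; split <;> omega

lemma ind_eq_one {e : ℕ → ℕ} {k : ℕ} (h : chi e k) : ind e k = 1 := by
  unfold ind; rw [if_pos h]

lemma ind_eq_zero {e : ℕ → ℕ} {k : ℕ} (h : ¬ chi e k) : ind e k = 0 := by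
  unfold ind; rw [if_neg h]

lemma chi_bounds {e : ℕ → ℕ} {k : ℕ} (h : chi e k) : 1 ≤ k ∧ k < numParts e := by
  obtain ⟨i, j, hik, hkj, hi, hj, _⟩ := h
  have h1 := hi.1
  have h2 := hj.2.2
  exact ⟨by omega, by omega⟩

lemma chiE_chi {e : ℕ → ℕ} {k : ℕ} (h : chiE e k) : chi e k :=
  ⟨k, k, le_refl k, le_refl k, h, h, fun t h1 h2 => by omega⟩

lemma special_Y_odd_of_chi {n : ℕ} {e : ℕ → ℕ} (hs : Special n e) {k : ℕ}
    (hk : k % 2 = 1) (h : chi e k) : psum e k % 2 = 1 := by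
  obtain ⟨i, j, hik, hkj, hi, hj, hconst⟩ := h
  have hconst' : ∀ t, i ≤ t → t < k → e t = e (j - 1) := by
    intro t h1 h2
    have := hconst (t+1) (by omega) (by omega)
    simpa using this
  have hsum : psum e k = psum e i + (k - i) * e (j - 1) := by
    rw [psum_add_Ico e hik]
    congr 1
    rw [Finset.sum_congr rfl
      (fun t ht => hconst' t (Finset.mem_Ico.1 ht).1 (Finset.mem_Ico.1 ht).2)]
    rw [Finset.sum_const, smul_eq_mul, Nat.card_Ico]
  have hYi : psum e i % 2 = 1 := by
    have := special_Y_odd hs (k := i) hi.1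
    have := hi.2.1
    omega
  have hki : (k - i) % 2 = 0 := by
    have := hi.1
    omega
  have hprod : ((k - i) * e (j-1)) % 2 = 0 := by
    rw [Nat.mul_mod, hki, zero_mul]
    rfl
  omega

/-! ### The modified diagram `d = (e⁺)⁻` -/

lemma numParts_boxPlus {n : ℕ} {e : ℕ → ℕ} (hs : Special n e) :
    numParts (boxPlus e) = max (numParts e) 1 := by
  have hset : {j | 0 < boxPlus e j} = Set.Iio (max (numParts e) 1) := by
    ext j
    simp only [Set.mem_setOf_eq, Set.mem_Iio, boxPlus]
    have hc := max_choice (numParts e) 1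
    have hl := le_max_left (numParts e) 1
    have hr := le_max_right (numParts e) 1
    rcases eq_or_ne j 0 with h0 | h0
    · subst h0
      simp only [reduceIte]
      rcases hc with h | h <;> omega
    · rw [if_neg h0]
      have := lt_numParts_iff hs.1.1 j
      rcases hc with h | h <;> omega
  have hnp : numParts (boxPlus e) = {j | 0 < boxPlus e j}.ncard := rfl
  rw [hnp, hset, ← Finset.coe_range, Set.ncard_coe_finset, Finset.card_range]

lemma d_eq_of_small {n : ℕ} {e : ℕ → ℕ} (hs : Special n e) (hm : numParts e ≤ 1) :
    boxMinus (boxPlus e) = e := by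
  funext k
  unfold boxMinus
  rw [numParts_boxPlus hs]
  have hmax : max (numParts e) 1 = 1 := by omega
  rw [hmax]
  simp only [Nat.sub_self]
  rcases eq_or_ne k 0 with h0 | h0
  · subst h0
    simp [boxPlus]
  · rw [if_neg h0]
    simp [boxPlus, h0]

lemma d_apply {n : ℕ} {e : ℕ → ℕ} (hs : Special n e) (hm : 2 ≤ numParts e) (k : ℕ) :
    boxMinus (boxPlus e) k =
      if k = 0 then e 0 + 1 else if k = numParts e - 1 then e k - 1 else e k := by
  unfold boxMinus
  rw [numParts_boxPlus hs]
  have hmax : max (numParts e) 1 = numParts e := by omega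
  rw [hmax]
  rcases eq_or_ne k 0 with h0 | h0
  · subst h0
    rw [if_neg (by omega), if_pos rfl]
    simp [boxPlus]
  · rw [if_neg h0]
    rcases eq_or_ne k (numParts e - 1) with h1 | h1
    · rw [if_pos h1, if_pos h1]
      simp [boxPlus, h0]
    · rw [if_neg h1, if_neg h1]
      simp [boxPlus, h0]

lemma psum_d {n : ℕ} {e : ℕ → ℕ} (hs : Special n e) (k : ℕ) :
    psum (boxMinus (boxPlus e)) k =
      psum e k + (if 1 ≤ k ∧ k < numParts e then 1 else 0) := by
  rcases le_or_gt (numParts e) 1 with hm | hm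
  · rw [d_eq_of_small hs hm]
    have : ¬ (1 ≤ k ∧ k < numParts e) := by omega
    rw [if_neg this]
    omega
  · induction k with
    | zero => simp [psum]
    | succ k ih =>
      rw [psum_succ, psum_succ, ih, d_apply hs (by omega) k]
      have hlast : k = numParts e - 1 → 1 ≤ e k := by
        intro h
        have : k < numParts e := by omega
        exact special_e_pos hs this
      rcases eq_or_ne k 0 with h0 | h0
      · subst h0
        rw [if_pos rfl]
        have : ¬ (1 ≤ 0 ∧ 0 < numParts e) := by omega
        rw [if_neg this]
        have h1 : (1 ≤ 1 ∧ 1 < numParts e) := by omega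
        rw [if_pos h1]
        omega
      · rw [if_neg h0]
        rcases eq_or_ne k (numParts e - 1) with h1 | h1
        · rw [if_pos h1]
          have ha : (1 ≤ k ∧ k < numParts e) := by omega
          rw [if_pos ha]
          have hb : ¬ (1 ≤ k+1 ∧ k+1 < numParts e) := by omega
          rw [if_neg hb]
          have := hlast h1
          omega
        · rw [if_neg h1]
          rcases le_or_gt (numParts e) k with h2 | h2
          · have ha : ¬ (1 ≤ k ∧ k < numParts e) := by omega
            rw [if_neg ha]
            have hb : ¬ (1 ≤ k+1 ∧ k+1 < numParts e) := by omega
            rw [if_neg hb]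
            omega
          · have ha : (1 ≤ k ∧ k < numParts e) := by omega
            rw [if_pos ha]
            have hb : (1 ≤ k+1 ∧ k+1 < numParts e) := by omega
            rw [if_pos hb]
            omega

lemma size_d {n : ℕ} {e : ℕ → ℕ} (hs : Special n e) :
    size (boxMinus (boxPlus e)) = 2 * n := by
  set m := numParts e with hmdef
  have hdz : ∀ i, max m 1 ≤ i → boxMinus (boxPlus e) i = 0 := by
    intro i hi
    rcases le_or_gt m 1 with hm | hm
    · rw [d_eq_of_small hs hm]
      exact special_e_zero hs (by omega)
    · rw [d_apply hs (by omega) i, if_neg (by omega), if_neg (by omega)]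
      exact special_e_zero hs (by omega)
  rw [size_eq_psum hdz, psum_d hs, if_neg (by omega)]
  have hez : ∀ i, m ≤ i → e i = 0 := fun i hi => special_e_zero hs hi
  rw [← size_eq_psum (N := max m 1) (fun i hi => hez i (by omega))]
  exact hs.2.2

end Stmt4
namespace Stmt4

open Finset

variable {n : ℕ} {e : ℕ → ℕ}

lemma e_even_of_not_chi (hs : Special n e) {k : ℕ} (hk : k % 2 = 1)
    (h : ¬ chi e k) : e k % 2 = 0 := by
  by_contra hodd
  have hkm : k < numParts e := by
    by_contra hge
    rw [special_e_zero hs (by omega)] at hodd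
    omega
  have hpe : e (k-1) % 2 = 1 := by
    have := special_pair hs (k-1) (by omega)
    have h2 : k - 1 + 1 = k := by omega
    rw [h2] at this
    omega
  exact h (chiE_chi ⟨hk, hpe, hkm⟩)

lemma e_pred_even_of_not_chi (hs : Special n e) {k : ℕ} (hk : k % 2 = 1)
    (h : ¬ chi e k) : e (k - 1) % 2 = 0 := by
  by_contra hodd
  rcases lt_trichotomy k (numParts e) with h1 | h1 | h1
  · exact h (chiE_chi ⟨hk, by omega, h1⟩)
  · have hp := special_pair hs (k-1) (by omega)
    have h2 : k - 1 + 1 = k := by omega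
    rw [h2] at hp
    have : e k = 0 := special_e_zero hs (by omega)
    omega
  · have : e (k-1) = 0 := special_e_zero hs (by omega)
    omega

lemma Y_even_of_not_chi_odd (hs : Special n e) {k : ℕ} (hk : k % 2 = 1)
    (h : ¬ chi e k) : psum e k % 2 = 0 := by
  have := special_Y_odd hs hk
  have := e_pred_even_of_not_chi hs hk h
  omega

/-- key middle-extension: a constant odd stretch extends `chi` to the middle even point -/
lemma chi_mid (hs : Special n e) {k : ℕ} (hk : k % 2 = 1)
    (heq : e k = e (k+1)) (hodd : e k % 2 = 1) : chi e (k+1) := by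
  have hkm : k < numParts e := by
    by_contra hge
    rw [special_e_zero hs (by omega)] at hodd
    omega
  have hek : e (k-1) % 2 = 1 := by
    have := special_pair hs (k-1) (by omega)
    have h2 : k - 1 + 1 = k := by omega
    rw [h2] at this
    omega
  have hk1m : k + 1 < numParts e := by
    have : 0 < e (k+1) := by omega
    have := lt_numParts_iff hs.1.1 (k+1)
    omega
  have hk2m : k + 2 < numParts e := by
    rcases lt_or_ge (k+2) (numParts e) with h1 | h1
    · exact h1
    · exfalso
      have hm : numParts e = k + 2 := by omega
      have hp := special_pair hs (k+1) (by omega)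
      rw [show k + 1 + 1 = k + 2 by omega] at hp
      have : e (k+2) = 0 := special_e_zero hs (by omega)
      omega
  refine ⟨k, k+2, by omega, by omega, ⟨hk, hek, hkm⟩,
    ⟨by omega, show e (k+1) % 2 = 1 by omega, hk2m⟩, ?_⟩
  intro t h1 h2
  have ht : t = k + 1 ∨ t = k + 2 := by omega
  rcases ht with h | h <;> subst h
  · exact heq
  · rfl

lemma Pf_mono (hs : Special n e) (k : ℕ) : Pf e k ≤ Pf e (k+1) := by
  unfold Pf
  rw [psum_succ]
  by_cases h1 : chi e k
  · by_cases h2 : chi e (k+1)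
    · rw [ind_eq_one h1, ind_eq_one h2]
      omega
    · rw [ind_eq_one h1, ind_eq_zero h2]
      have hb := chi_bounds h1
      have := special_e_pos hs hb.2
      omega
  · rw [ind_eq_zero h1]
    have := ind_le_one e (k+1)
    omega

lemma Pf_mono_le (hs : Special n e) {k l : ℕ} (h : k ≤ l) : Pf e k ≤ Pf e l := by
  induction l with
  | zero =>
    simp only [Nat.le_zero] at h
    rw [h]
  | succ l ih =>
    rcases eq_or_lt_of_le h with h1 | h1
    · rw [h1]
    · exact le_trans (ih (by omega)) (Pf_mono hs l)

lemma Pf_concave (hs : Special n e) (k : ℕ) :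
    Pf e k + Pf e (k+2) ≤ 2 * Pf e (k+1) := by
  unfold Pf
  have hY2 : psum e (k+2) = psum e (k+1) + e (k+1) := by
    have : k + 2 = (k+1)+1 := by omega
    rw [this, psum_succ]
  have hY1 : psum e (k+1) = psum e k + e k := psum_succ e k
  have hmono : e (k+1) ≤ e k := hs.1.1.1 (by omega)
  by_cases h1 : chi e (k+1)
  · rw [ind_eq_one h1]
    have := ind_le_one e k
    have := ind_le_one e (k+2)
    omega
  · rw [ind_eq_zero h1]
    by_cases h0 : chi e k
    · -- left neighbour has chi
      obtain ⟨i1, j1, hik, hkj, hi1, hj1, hc1⟩ := h0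
      have hj1k : j1 = k := by
        by_contra hne
        exact h1 ⟨i1, j1, by omega, by omega, hi1, hj1, hc1⟩
      rw [hj1k] at hj1 hc1 hkj
      have hkodd : k % 2 = 1 := hj1.1
      have hekodd : e k % 2 = 1 := by
        have hp := special_pair hs (k-1) (by omega)
        have h2 : k - 1 + 1 = k := by omega
        rw [h2] at hp
        have := hj1.2.1
        omega
      have hneq : e k ≠ e (k+1) := fun heq => h1 (chi_mid hs hkodd heq hekodd)
      by_cases h2 : chi e (k+2)
      · -- both neighbours: need gap ≥ 2
        obtain ⟨i2, j2, hik2, hkj2, hi2, hj2, hc2⟩ := h2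
        have hi2k : i2 = k + 2 := by
          by_contra hne
          exact h1 ⟨i2, j2, by omega, by omega, hi2, hj2, hc2⟩
        rw [hi2k] at hi2 hc2 hik2
        have hek1odd : e (k+1) % 2 = 1 := by
          have := hi2.2.1
          simpa using this
        rw [ind_eq_one ⟨i1, k, hik, le_refl k, hi1, hj1, hc1⟩,
            ind_eq_one ⟨k+2, j2, le_refl (k+2), hkj2, hi2, hj2, hc2⟩]
        omega
      · rw [ind_eq_one ⟨i1, k, hik, le_refl k, hi1, hj1, hc1⟩, ind_eq_zero h2]
        omega
    · rw [ind_eq_zero h0]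
      by_cases h2 : chi e (k+2)
      · -- right neighbour only
        obtain ⟨i2, j2, hik2, hkj2, hi2, hj2, hc2⟩ := h2
        have hi2k : i2 = k + 2 := by
          by_contra hne
          exact h1 ⟨i2, j2, by omega, by omega, hi2, hj2, hc2⟩
        rw [hi2k] at hi2 hc2 hik2
        have hkodd : k % 2 = 1 := by
          have := hi2.1
          omega
        have hek1odd : e (k+1) % 2 = 1 := by
          have := hi2.2.1
          simpa using this
        have hneq : e k ≠ e (k+1) := by
          intro heq
          have hekodd : e k % 2 = 1 := by omega
          exact h1 (chi_mid hs hkodd heq hekodd)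
        rw [ind_eq_one ⟨k+2, j2, le_refl (k+2), hkj2, hi2, hj2, hc2⟩]
        omega
      · rw [ind_eq_zero h2]
        omega

lemma psum_gam (hs : Special n e) (k : ℕ) : psum (gam e) k = Pf e k := by
  induction k with
  | zero =>
    have h0 : ¬ chi e 0 := fun h => by have := chi_bounds h; omega
    simp [psum, Pf, ind_eq_zero h0]
  | succ k ih =>
    rw [psum_succ, ih]
    unfold gam
    have := Pf_mono hs k
    omega

lemma gam_antitone (hs : Special n e) : Antitone (gam e) := by
  have step : ∀ k, gam e (k+1) ≤ gam e k := by
    intro k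
    unfold gam
    rw [show k + 1 + 1 = k + 2 by omega]
    have h1 := Pf_mono hs k
    have h2 := Pf_mono hs (k+1)
    rw [show k + 1 + 1 = k + 2 by omega] at h2
    have h3 := Pf_concave hs k
    omega
  exact antitone_nat_of_succ_le step

lemma gam_zero_of_ge (hs : Special n e) {k : ℕ} (h : numParts e ≤ k) : gam e k = 0 := by
  unfold gam Pf
  have h1 : ind e k = 0 := by
    apply ind_eq_zero
    intro hc
    have := chi_bounds hc
    omega
  have h2 : ind e (k+1) = 0 := by
    apply ind_eq_zero
    intro hc
    have := chi_bounds hc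
    omega
  rw [psum_succ, h1, h2, special_e_zero hs h]
  omega

lemma gam_partition (hs : Special n e) : IsPartition (gam e) :=
  ⟨gam_antitone hs, ⟨numParts e, fun i hi => gam_zero_of_ge hs hi⟩⟩

lemma size_gam (hs : Special n e) : size (gam e) = 2 * n := by
  rw [size_eq_psum (N := numParts e) (fun i hi => gam_zero_of_ge hs hi), psum_gam hs]
  unfold Pf
  have h1 : ind e (numParts e) = 0 := by
    apply ind_eq_zero
    intro hc
    have := chi_bounds hc
    omega
  rw [h1, ← size_eq_psum (N := numParts e) (fun i hi => special_e_zero hs hi)]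
  rw [hs.2.2]
  omega

lemma dom_gam_d (hs : Special n e) : Dom (gam e) (boxMinus (boxPlus e)) := by
  constructor
  · rw [size_gam hs, size_d hs]
  · intro k
    rw [psum_gam hs, psum_d hs]
    unfold Pf
    by_cases h : chi e k
    · have := chi_bounds h
      rw [ind_eq_one h, if_pos (by omega)]
    · rw [ind_eq_zero h]
      split <;> omega

lemma dom_e_gam (hs : Special n e) : Dom e (gam e) := by
  constructor
  · rw [size_gam hs]; exact hs.2.2
  · intro k
    rw [psum_gam hs]
    unfold Pf
    omega

lemma typeC_gam (hs : Special n e) : IsTypeC (gam e) := by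
  apply typeC_of_corners (gam_partition hs)
  · rw [size_gam hs]; omega
  · intro k hk hcor
    rw [psum_gam hs]
    unfold Pf
    have hcor2 : Pf e (k-1) + Pf e (k+1) < 2 * Pf e k := by
      unfold gam at hcor
      have hmono0 := Pf_mono hs (k-1)
      have hmono1 := Pf_mono hs k
      have hk1 : k - 1 + 1 = k := by omega
      rw [hk1] at hcor hmono0
      omega
    rcases Nat.even_or_odd k with hke | hko
    · -- k even : show no chi at k
      have hke2 : k % 2 = 0 := Nat.even_iff.1 hke
      have hnochi : ¬ chi e k := by
        intro hc
        obtain ⟨i, j, hik, hkj, hi, hj, hc1⟩ := hc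
        have hiodd := hi.1
        have hjodd := hj.1
        have h_ilt : i < k := by omega
        have hkjlt : k < j := by omega
        have hchim : chi e (k-1) := ⟨i, j, by omega, by omega, hi, hj, hc1⟩
        have hchip : chi e (k+1) := ⟨i, j, by omega, by omega, hi, hj, hc1⟩
        have he1 : e (k-1) = e (j-1) := by
          have := hc1 k (by omega) (by omega)
          exact this
        have he2 : e k = e (j-1) := by
          have := hc1 (k+1) (by omega) (by omega)
          simpa using this
        have hY1 : psum e k = psum e (k-1) + e (k-1) := by
          have h2 : k = (k-1)+1 := by omega
          conv_lhs => rw [h2]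
          rw [psum_succ]
        have hY2 : psum e (k+1) = psum e k + e k := psum_succ e k
        have hchik : chi e k := ⟨i, j, hik, hkj, hi, hj, hc1⟩
        unfold Pf at hcor2
        rw [ind_eq_one hchim, ind_eq_one hchip, ind_eq_one hchik] at hcor2
        omega
      rw [ind_eq_zero hnochi]
      have := special_Y_even hs hke2
      omega
    · have hko2 : k % 2 = 1 := Nat.odd_iff.1 hko
      by_cases h : chi e k
      · rw [ind_eq_one h]
        have := special_Y_odd_of_chi hs hko2 h
        omega
      · rw [ind_eq_zero h]
        have := Y_even_of_not_chi_odd hs hko2 h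
        omega

/-- the pair condition making `transpose (gam e)` type D -/
lemma gam_pair (hs : Special n e) : ∀ i, i % 2 = 1 → gam e i % 2 = gam e (i+1) % 2 := by
  intro i hi
  have hm0 := Pf_mono hs i
  have hm1 := Pf_mono hs (i+1)
  have key : Pf e i % 2 = Pf e (i+2) % 2 := by
    unfold Pf
    have hY2 : psum e (i+2) = psum e i + e i + e (i+1) := by
      have h2 : i + 2 = (i+1)+1 := by omega
      rw [h2, psum_succ, psum_succ]
    by_cases h1 : chi e i <;> by_cases h2 : chi e (i+2)
    · rw [ind_eq_one h1, ind_eq_one h2]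
      have hp1 := special_Y_odd_of_chi hs hi h1
      have hp2 := special_Y_odd_of_chi hs (k := i+2) (by omega) h2
      omega
    · rw [ind_eq_one h1, ind_eq_zero h2]
      have hp1 := special_Y_odd_of_chi hs hi h1
      have hp2 := Y_even_of_not_chi_odd hs (k := i+2) (by omega) h2
      omega
    · rw [ind_eq_zero h1, ind_eq_one h2]
      have hp1 := Y_even_of_not_chi_odd hs hi h1
      have hp2 := special_Y_odd_of_chi hs (k := i+2) (by omega) h2
      omega
    · rw [ind_eq_zero h1, ind_eq_zero h2]
      have hp1 := Y_even_of_not_chi_odd hs hi h1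
      have hp2 := Y_even_of_not_chi_odd hs (k := i+2) (by omega) h2
      omega
  unfold gam
  rw [show i + 1 + 1 = i + 2 by omega]
  rw [show i + 1 + 1 = i + 2 by omega] at hm1
  omega

lemma typeD_transpose_gam (hs : Special n e) : IsTypeD (transpose (gam e)) := by
  have hpart := gam_partition hs
  refine ⟨transpose_isPartition hpart, ?_, ?_⟩
  · rw [size_transpose hpart, size_gam hs]
    exact ⟨n, by ring⟩
  · intro p hppos hpev
    have hp2 : p % 2 = 0 := Nat.even_iff.1 hpev
    have hmult := mult_eq (transpose_isPartition hpart) (p := p) (by omega)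
    rw [transpose_transpose hpart] at hmult
    rw [hmult]
    have hpair := gam_pair hs (p-1) (by omega)
    have hle : gam e p ≤ gam e (p-1) := gam_antitone hs (by omega)
    have hp1 : p - 1 + 1 = p := by omega
    rw [hp1] at hpair
    rw [Nat.even_iff]
    omega

end Stmt4
namespace Stmt4

open Finset

variable {n : ℕ} {e : ℕ → ℕ}

lemma corner_bound (hs : Special n e) {f : ℕ → ℕ} (hf : IsTypeC f)
    (hdom : ∀ k, psum f k ≤ psum (boxMinus (boxPlus e)) k) {k : ℕ}
    (hcor : k = 0 ∨ (0 < k ∧ f k < f (k - 1))) (hnot : ¬ chiE e k) :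
    psum f k ≤ psum e k := by
  rcases hcor with h0 | ⟨hk, hfk⟩
  · subst h0
    simp [psum]
  · have heven : psum f k % 2 = 0 := typeC_corner_even hf hk hfk
    have hb := hdom k
    rw [psum_d hs] at hb
    by_cases hin : 1 ≤ k ∧ k < numParts e
    · rw [if_pos hin] at hb
      rcases Nat.even_or_odd k with hke | hko
      · have := special_Y_even hs (Nat.even_iff.1 hke)
        omega
      · have hko2 : k % 2 = 1 := Nat.odd_iff.1 hko
        have hpe : e (k-1) % 2 = 0 := by
          by_contra hodd
          exact hnot ⟨hko2, by omega, hin.2⟩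
        have := special_Y_odd hs hko2
        omega
    · rw [if_neg hin] at hb
      exact hb

lemma psum_le_Pf (hs : Special n e) {f : ℕ → ℕ} (hf : IsTypeC f)
    (hdom : ∀ k, psum f k ≤ psum (boxMinus (boxPlus e)) k) :
    ∀ k, psum f k ≤ Pf e k := by
  intro k
  induction k using Nat.strong_induction_on with
  | _ k IH =>
  rcases Nat.eq_zero_or_pos k with h0 | hk
  · subst h0
    simp [psum, Pf]
  rcases Nat.eq_zero_or_pos (f (k-1)) with hv0 | hv
  · -- tail case : f is zero from some point before k
    set l := transpose f 0 with hl
    have hlk : l ≤ k - 1 := by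
      rw [hl]
      rw [transpose_le_iff hf.1 0 (k-1)]
      omega
    have hzero : ∀ t, l ≤ t → t < k → f t = 0 := by
      intro t ht _
      have := (transpose_le_iff hf.1 0 t).1 (by omega)
      omega
    have hps : psum f k = psum f l := by
      rw [psum_add_Ico f (show l ≤ k by omega)]
      have : ∑ t ∈ Finset.Ico l k, f t = 0 :=
        Finset.sum_eq_zero (fun t ht =>
          hzero t (Finset.mem_Ico.1 ht).1 (Finset.mem_Ico.1 ht).2)
      omega
    rw [hps]
    exact le_trans (IH l (by omega)) (Pf_mono_le hs (by omega))
  · -- main case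
    set v := f (k-1) with hvdef
    set i := transpose f v with hidef
    set j := transpose f (v-1) with hjdef
    have hik : i ≤ k - 1 := by
      rw [hidef, transpose_le_iff hf.1 v (k-1)]
    have hkj : k ≤ j := by
      have : k - 1 < j := by
        rw [hjdef]
        rw [lt_transpose_iff hf.1 (v-1) (k-1)]
        omega
      omega
    have hij : i < j := by omega
    have hrun : ∀ t, i ≤ t → t < j → f t = v := by
      intro t h1 h2
      have hle : f t ≤ v := (transpose_le_iff hf.1 v t).1 h1
      have hgt : v - 1 < f t := (lt_transpose_iff hf.1 (v-1) t).1 h2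
      omega
    -- the two corners of f
    have hcori : i = 0 ∨ (0 < i ∧ f i < f (i-1)) := by
      rcases Nat.eq_zero_or_pos i with h0 | hpos
      · exact Or.inl h0
      · refine Or.inr ⟨hpos, ?_⟩
        have h1 : f i = v := hrun i (le_refl i) hij
        have h2 : v < f (i-1) := (lt_transpose_iff hf.1 v (i-1)).1 (by omega)
        omega
    have hcorj : 0 < j ∧ f j < f (j-1) := by
      refine ⟨by omega, ?_⟩
      have h1 : f j ≤ v - 1 := (transpose_le_iff hf.1 (v-1) j).1 (le_refl j)
      have h2 : f (j-1) = v := hrun (j-1) (by omega) (by omega)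
      omega
    -- partial sum identities along the run
    have hbk : psum f k = psum f i + (k - i) * v := by
      rw [psum_add_Ico f (show i ≤ k by omega)]
      congr 1
      rw [Finset.sum_congr rfl (fun t ht =>
        hrun t (Finset.mem_Ico.1 ht).1 (by have := (Finset.mem_Ico.1 ht).2; omega))]
      rw [Finset.sum_const, smul_eq_mul, Nat.card_Ico]
    have hbj : psum f j = psum f i + (j - i) * v := by
      rw [psum_add_Ico f (show i ≤ j by omega)]
      congr 1
      rw [Finset.sum_congr rfl (fun t ht =>
        hrun t (Finset.mem_Ico.1 ht).1 (Finset.mem_Ico.1 ht).2)]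
      rw [Finset.sum_const, smul_eq_mul, Nat.card_Ico]
    by_cases hkeqj : k = j
    · -- k is itself a corner of f
      by_cases hchiEk : chiE e k
      · have hchik : chi e k := chiE_chi hchiEk
        have hb := hdom k
        rw [psum_d hs] at hb
        unfold Pf
        rw [ind_eq_one hchik]
        have hbnd := chi_bounds hchik
        rw [if_pos (by omega)] at hb
        omega
      · have := corner_bound hs hf hdom (k := k)
          (by rw [hkeqj]; exact Or.inr hcorj) hchiEk
        unfold Pf
        omega
    · -- i < k < j : interpolation
      have hkj' : k < j := by omega
      set A := k - i with hA
      set B := j - k with hB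
      have hA1 : 1 ≤ A := by omega
      have hB1 : 1 ≤ B := by omega
      have hABji : j - i = A + B := by omega
      rw [hABji] at hbj
      have hkey : (A + B) * psum f k = B * psum f i + A * psum f j := by
        rw [hbk, hbj]
        ring
      -- concavity data for e
      have hek : e k ≤ e (k-1) := hs.1.1.1 (by omega)
      have hYlow : psum e i + A * e (k-1) ≤ psum e k := by
        rw [psum_add_Ico e (show i ≤ k by omega)]
        have : A * e (k-1) = ∑ _t ∈ Finset.Ico i k, e (k-1) := by
          rw [Finset.sum_const, smul_eq_mul, Nat.card_Ico]
        rw [this]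
        have hle : ∀ t ∈ Finset.Ico i k, e (k-1) ≤ e t := by
          intro t ht
          exact hs.1.1.1 (by have := (Finset.mem_Ico.1 ht).2; omega)
        have := Finset.sum_le_sum hle
        omega
      have hYhigh : psum e j ≤ psum e k + B * e k := by
        rw [psum_add_Ico e (show k ≤ j by omega)]
        have hBe : B * e k = ∑ _t ∈ Finset.Ico k j, e k := by
          rw [Finset.sum_const, smul_eq_mul, Nat.card_Ico]
        rw [hBe]
        have hle : ∀ t ∈ Finset.Ico k j, e t ≤ e k := by
          intro t ht
          exact hs.1.1.1 (Finset.mem_Ico.1 ht).1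
        have := Finset.sum_le_sum hle
        omega
      -- multiplied versions
      have hm1 : B * psum e i + B * (A * e (k-1)) ≤ B * psum e k := by
        have := Nat.mul_le_mul (le_refl B) hYlow
        rw [Nat.mul_add] at this
        exact this
      have hm2 : A * psum e j ≤ A * psum e k + A * (B * e k) := by
        have := Nat.mul_le_mul (le_refl A) hYhigh
        rw [Nat.mul_add] at this
        exact this
      have hm3 : A * (B * e k) ≤ A * (B * e (k-1)) :=
        Nat.mul_le_mul (le_refl A) (Nat.mul_le_mul (le_refl B) hek)
      have hm4 : B * (A * e (k-1)) = A * (B * e (k-1)) := by ring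
      have hm5 : (A + B) * psum e k = A * psum e k + B * psum e k := by ring
      have hconc : B * psum e i + A * psum e j ≤ (A + B) * psum e k := by
        omega
      -- bounds at the corners of f
      have hfi1 : psum f i ≤ psum e i + 1 := by
        have hb := hdom i
        rw [psum_d hs] at hb
        split at hb <;> omega
      have hfj1 : psum f j ≤ psum e j + 1 := by
        have hb := hdom j
        rw [psum_d hs] at hb
        split at hb <;> omega
      by_cases hchii : chiE e i <;> by_cases hchij : chiE e j
      · -- both chiE : the hard case
        by_cases hchik : chi e k
        · -- allowed to exceed by one
          unfold Pf
          rw [ind_eq_one hchik]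
          by_contra hcon
          push_neg at hcon
          have hge : psum e k + 2 ≤ psum f k := by omega
          have h1 : (A+B) * (psum e k + 2) ≤ (A+B) * psum f k :=
            Nat.mul_le_mul (le_refl (A+B)) hge
          have h2 : B * psum f i ≤ B * (psum e i + 1) := Nat.mul_le_mul (le_refl B) hfi1
          have h3 : A * psum f j ≤ A * (psum e j + 1) := Nat.mul_le_mul (le_refl A) hfj1
          have h4 : B * (psum e i + 1) = B * psum e i + B := by ring
          have h5 : A * (psum e j + 1) = A * psum e j + A := by ring
          have h6 : (A+B) * (psum e k + 2) = (A+B) * psum e k + 2 * A + 2 * B := by ring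
          omega
        · -- cannot even reach psum e k + 1 : strictness from non-constancy
          have hS : B * psum e i + A * psum e j + 1 ≤ (A + B) * psum e k := by
            by_cases hc1 : ∀ t, i ≤ t → t < k → e t = e (k-1)
            · by_cases hc2 : ∀ t, k ≤ t → t < j → e t = e k
              · by_cases hc3 : e k = e (k-1)
                · exfalso
                  apply hchik
                  refine ⟨i, j, by omega, by omega, hchii, hchij, ?_⟩
                  intro t h1 h2
                  have hejm : e (j-1) = e k := hc2 (j-1) (by omega) (by omega)
                  rcases Nat.lt_or_ge (t-1) k with hlt | hge
                  · rw [hc1 (t-1) (by omega) hlt, hejm, hc3]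
                  · rw [hc2 (t-1) hge (by omega), hejm]
                · -- e k < e (k-1) : gap of at least 1, slack A*B
                  have heks : e k + 1 ≤ e (k-1) := by omega
                  have hm3s : A * (B * (e k + 1)) ≤ A * (B * e (k-1)) :=
                    Nat.mul_le_mul (le_refl A) (Nat.mul_le_mul (le_refl B) heks)
                  have hexp : A * (B * (e k + 1)) = A * (B * e k) + A * B := by ring
                  have hab1 : 1 ≤ A * B := Nat.one_le_iff_ne_zero.2 (by positivity)
                  omega
              · -- some row in [k, j) is strictly smaller than e k
                push_neg at hc2
                obtain ⟨t0, ht1, ht2, ht3⟩ := hc2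
                have hYs : psum e j + 1 ≤ psum e k + B * e k := by
                  rw [psum_add_Ico e (show k ≤ j by omega)]
                  have hBe : B * e k = ∑ _t ∈ Finset.Ico k j, e k := by
                    rw [Finset.sum_const, smul_eq_mul, Nat.card_Ico]
                  rw [hBe]
                  have hlt : ∑ t ∈ Finset.Ico k j, e t < ∑ _t ∈ Finset.Ico k j, e k := by
                    apply Finset.sum_lt_sum
                    · intro t ht
                      exact hs.1.1.1 (Finset.mem_Ico.1 ht).1
                    · refine ⟨t0, Finset.mem_Ico.2 ⟨ht1, ht2⟩, ?_⟩
                      have := hs.1.1.1 ht1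
                      omega
                  omega
                have hmul := Nat.mul_le_mul (le_refl A) hYs
                have hexp1 : A * (psum e j + 1) = A * psum e j + A := by ring
                have hexp2 : A * (psum e k + B * e k) = A * psum e k + A * (B * e k) := by
                  ring
                omega
            · -- some row in [i, k) is strictly bigger than e (k-1)
              push_neg at hc1
              obtain ⟨t0, ht1, ht2, ht3⟩ := hc1
              have hYs : psum e i + A * e (k-1) + 1 ≤ psum e k := by
                rw [psum_add_Ico e (show i ≤ k by omega)]
                have hAe : A * e (k-1) = ∑ _t ∈ Finset.Ico i k, e (k-1) := by
                  rw [Finset.sum_const, smul_eq_mul, Nat.card_Ico]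
                rw [hAe]
                have hlt : ∑ _t ∈ Finset.Ico i k, e (k-1) < ∑ t ∈ Finset.Ico i k, e t := by
                  apply Finset.sum_lt_sum
                  · intro t ht
                    exact hs.1.1.1 (by have := (Finset.mem_Ico.1 ht).2; omega)
                  · refine ⟨t0, Finset.mem_Ico.2 ⟨ht1, ht2⟩, ?_⟩
                    have := hs.1.1.1 (show t0 ≤ k - 1 by omega)
                    omega
                omega
              have hmul := Nat.mul_le_mul (le_refl B) hYs
              have hexp1 : B * (psum e i + A * e (k-1) + 1) =
                  B * psum e i + B * (A * e (k-1)) + B := by ring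
              omega
          -- conclude psum f k ≤ psum e k
          unfold Pf
          have hfin : psum f k ≤ psum e k := by
            by_contra hcon
            push_neg at hcon
            have h1 : (A+B) * (psum e k + 1) ≤ (A+B) * psum f k :=
              Nat.mul_le_mul (le_refl (A+B)) hcon
            have h2 : B * psum f i ≤ B * (psum e i + 1) := Nat.mul_le_mul (le_refl B) hfi1
            have h3 : A * psum f j ≤ A * (psum e j + 1) := Nat.mul_le_mul (le_refl A) hfj1
            have h4 : B * (psum e i + 1) = B * psum e i + B := by ring
            have h5 : A * (psum e j + 1) = A * psum e j + A := by ring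
            have h6 : (A+B) * (psum e k + 1) = (A+B) * psum e k + A + B := by ring
            omega
          omega
      · -- chiE i, not chiE j
        have hfj : psum f j ≤ psum e j := corner_bound hs hf hdom (Or.inr hcorj) hchij
        unfold Pf
        have hfin : psum f k ≤ psum e k := by
          by_contra hcon
          push_neg at hcon
          have h1 : (A+B) * (psum e k + 1) ≤ (A+B) * psum f k :=
            Nat.mul_le_mul (le_refl (A+B)) hcon
          have h2 : B * psum f i ≤ B * (psum e i + 1) := Nat.mul_le_mul (le_refl B) hfi1
          have h3 : A * psum f j ≤ A * psum e j := Nat.mul_le_mul (le_refl A) hfj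
          have h4 : B * (psum e i + 1) = B * psum e i + B := by ring
          have h6 : (A+B) * (psum e k + 1) = (A+B) * psum e k + A + B := by ring
          omega
        omega
      · -- not chiE i, chiE j
        have hfi : psum f i ≤ psum e i := corner_bound hs hf hdom hcori hchii
        unfold Pf
        have hfin : psum f k ≤ psum e k := by
          by_contra hcon
          push_neg at hcon
          have h1 : (A+B) * (psum e k + 1) ≤ (A+B) * psum f k :=
            Nat.mul_le_mul (le_refl (A+B)) hcon
          have h2 : B * psum f i ≤ B * psum e i := Nat.mul_le_mul (le_refl B) hfi
          have h3 : A * psum f j ≤ A * (psum e j + 1) := Nat.mul_le_mul (le_refl A) hfj1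
          have h5 : A * (psum e j + 1) = A * psum e j + A := by ring
          have h6 : (A+B) * (psum e k + 1) = (A+B) * psum e k + A + B := by ring
          omega
        omega
      · -- neither
        have hfi : psum f i ≤ psum e i := corner_bound hs hf hdom hcori hchii
        have hfj : psum f j ≤ psum e j := corner_bound hs hf hdom (Or.inr hcorj) hchij
        unfold Pf
        have hfin : psum f k ≤ psum e k := by
          by_contra hcon
          push_neg at hcon
          have h1 : (A+B) * (psum e k + 1) ≤ (A+B) * psum f k :=
            Nat.mul_le_mul (le_refl (A+B)) hcon
          have h2 : B * psum f i ≤ B * psum e i := Nat.mul_le_mul (le_refl B) hfi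
          have h3 : A * psum f j ≤ A * psum e j := Nat.mul_le_mul (le_refl A) hfj
          have h6 : (A+B) * (psum e k + 1) = (A+B) * psum e k + A + B := by ring
          omega
        omega

lemma isCollapse_gam (hs : Special n e) :
    IsCollapse IsTypeC (boxMinus (boxPlus e)) (gam e) := by
  refine ⟨typeC_gam hs, dom_gam_d hs, fun f hfC hdom => ⟨?_, ?_⟩⟩
  · rw [hdom.1, size_d hs, size_gam hs]
  · intro k
    rw [psum_gam hs]
    exact psum_le_Pf hs hfC hdom.2 k

lemma mSP_eq_gam (hs : Special n e) : mSP e = gam e := by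
  unfold mSP collapseC
  exact collapse_eq (isCollapse_gam hs)

end Stmt4
namespace Stmt4

open Finset

variable {n : ℕ} {e : ℕ → ℕ}

lemma corner_bound_D (hs : Special n e) {f : ℕ → ℕ} (hfD : IsTypeD f)
    (hdom : ∀ k, psum f k ≤ Pf e k) {k : ℕ}
    (hcor : k = 0 ∨ (0 < k ∧ f k < f (k - 1))) :
    psum f k ≤ psum e k := by
  rcases hcor with h0 | ⟨hk, hfk⟩
  · subst h0
    simp [psum]
  · have hDpar : (psum f k + k) % 2 = 0 := typeD_corner_even hfD hk hfk
    have hb := hdom k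
    unfold Pf at hb
    by_cases hchi : chi e k
    · rw [ind_eq_one hchi] at hb
      rcases Nat.even_or_odd k with hke | hko
      · have := special_Y_even hs (Nat.even_iff.1 hke)
        have hke2 := Nat.even_iff.1 hke
        omega
      · have hko2 := Nat.odd_iff.1 hko
        have := special_Y_odd_of_chi hs hko2 hchi
        omega
    · rw [ind_eq_zero hchi] at hb
      omega

lemma psum_le_Y (hs : Special n e) {f : ℕ → ℕ} (hfD : IsTypeD f)
    (hdom : ∀ k, psum f k ≤ Pf e k) :
    ∀ k, psum f k ≤ psum e k := by
  intro k
  induction k using Nat.strong_induction_on with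
  | _ k IH =>
  rcases Nat.eq_zero_or_pos k with h0 | hk
  · subst h0
    simp [psum]
  rcases Nat.eq_zero_or_pos (f (k-1)) with hv0 | hv
  · set l := transpose f 0 with hl
    have hlk : l ≤ k - 1 := by
      rw [hl, transpose_le_iff hfD.1 0 (k-1)]
      omega
    have hzero : ∀ t, l ≤ t → t < k → f t = 0 := by
      intro t ht _
      have := (transpose_le_iff hfD.1 0 t).1 (by omega)
      omega
    have hps : psum f k = psum f l := by
      rw [psum_add_Ico f (show l ≤ k by omega)]
      have : ∑ t ∈ Finset.Ico l k, f t = 0 :=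
        Finset.sum_eq_zero (fun t ht =>
          hzero t (Finset.mem_Ico.1 ht).1 (Finset.mem_Ico.1 ht).2)
      omega
    rw [hps]
    exact le_trans (IH l (by omega)) (psum_mono e (by omega))
  · set v := f (k-1) with hvdef
    set i := transpose f v with hidef
    set j := transpose f (v-1) with hjdef
    have hik : i ≤ k - 1 := by
      rw [hidef, transpose_le_iff hfD.1 v (k-1)]
    have hkj : k ≤ j := by
      have : k - 1 < j := by
        rw [hjdef]
        rw [lt_transpose_iff hfD.1 (v-1) (k-1)]
        omega
      omega
    have hij : i < j := by omega
    have hrun : ∀ t, i ≤ t → t < j → f t = v := by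
      intro t h1 h2
      have hle : f t ≤ v := (transpose_le_iff hfD.1 v t).1 h1
      have hgt : v - 1 < f t := (lt_transpose_iff hfD.1 (v-1) t).1 h2
      omega
    have hcori : i = 0 ∨ (0 < i ∧ f i < f (i-1)) := by
      rcases Nat.eq_zero_or_pos i with h0 | hpos
      · exact Or.inl h0
      · refine Or.inr ⟨hpos, ?_⟩
        have h1 : f i = v := hrun i (le_refl i) hij
        have h2 : v < f (i-1) := (lt_transpose_iff hfD.1 v (i-1)).1 (by omega)
        omega
    have hcorj : 0 < j ∧ f j < f (j-1) := by
      refine ⟨by omega, ?_⟩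
      have h1 : f j ≤ v - 1 := (transpose_le_iff hfD.1 (v-1) j).1 (le_refl j)
      have h2 : f (j-1) = v := hrun (j-1) (by omega) (by omega)
      omega
    have hbk : psum f k = psum f i + (k - i) * v := by
      rw [psum_add_Ico f (show i ≤ k by omega)]
      congr 1
      rw [Finset.sum_congr rfl (fun t ht =>
        hrun t (Finset.mem_Ico.1 ht).1 (by have := (Finset.mem_Ico.1 ht).2; omega))]
      rw [Finset.sum_const, smul_eq_mul, Nat.card_Ico]
    have hbj : psum f j = psum f i + (j - i) * v := by
      rw [psum_add_Ico f (show i ≤ j by omega)]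
      congr 1
      rw [Finset.sum_congr rfl (fun t ht =>
        hrun t (Finset.mem_Ico.1 ht).1 (Finset.mem_Ico.1 ht).2)]
      rw [Finset.sum_const, smul_eq_mul, Nat.card_Ico]
    have hfi : psum f i ≤ psum e i := corner_bound_D hs hfD hdom hcori
    have hfj : psum f j ≤ psum e j := corner_bound_D hs hfD hdom (Or.inr hcorj)
    by_cases hkeqj : k = j
    · rw [hkeqj]
      exact hfj
    · have hkj' : k < j := by omega
      set A := k - i with hA
      set B := j - k with hB
      have hA1 : 1 ≤ A := by omega
      have hB1 : 1 ≤ B := by omega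
      have hABji : j - i = A + B := by omega
      rw [hABji] at hbj
      have hkey : (A + B) * psum f k = B * psum f i + A * psum f j := by
        rw [hbk, hbj]
        ring
      have hek : e k ≤ e (k-1) := hs.1.1.1 (by omega)
      have hYlow : psum e i + A * e (k-1) ≤ psum e k := by
        rw [psum_add_Ico e (show i ≤ k by omega)]
        have : A * e (k-1) = ∑ _t ∈ Finset.Ico i k, e (k-1) := by
          rw [Finset.sum_const, smul_eq_mul, Nat.card_Ico]
        rw [this]
        have hle : ∀ t ∈ Finset.Ico i k, e (k-1) ≤ e t := by
          intro t ht
          exact hs.1.1.1 (by have := (Finset.mem_Ico.1 ht).2; omega)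
        have := Finset.sum_le_sum hle
        omega
      have hYhigh : psum e j ≤ psum e k + B * e k := by
        rw [psum_add_Ico e (show k ≤ j by omega)]
        have hBe : B * e k = ∑ _t ∈ Finset.Ico k j, e k := by
          rw [Finset.sum_const, smul_eq_mul, Nat.card_Ico]
        rw [hBe]
        have hle : ∀ t ∈ Finset.Ico k j, e t ≤ e k := by
          intro t ht
          exact hs.1.1.1 (Finset.mem_Ico.1 ht).1
        have := Finset.sum_le_sum hle
        omega
      have hm1 : B * psum e i + B * (A * e (k-1)) ≤ B * psum e k := by
        have := Nat.mul_le_mul (le_refl B) hYlow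
        rw [Nat.mul_add] at this
        exact this
      have hm2 : A * psum e j ≤ A * psum e k + A * (B * e k) := by
        have := Nat.mul_le_mul (le_refl A) hYhigh
        rw [Nat.mul_add] at this
        exact this
      have hm3 : A * (B * e k) ≤ A * (B * e (k-1)) :=
        Nat.mul_le_mul (le_refl A) (Nat.mul_le_mul (le_refl B) hek)
      have hm4 : B * (A * e (k-1)) = A * (B * e (k-1)) := by ring
      have hm5 : (A + B) * psum e k = A * psum e k + B * psum e k := by ring
      by_contra hcon
      push_neg at hcon
      have h1 : (A+B) * (psum e k + 1) ≤ (A+B) * psum f k :=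
        Nat.mul_le_mul (le_refl (A+B)) hcon
      have h2 : B * psum f i ≤ B * psum e i := Nat.mul_le_mul (le_refl B) hfi
      have h3 : A * psum f j ≤ A * psum e j := Nat.mul_le_mul (le_refl A) hfj
      have h6 : (A+B) * (psum e k + 1) = (A+B) * psum e k + A + B := by ring
      omega

/-- Any special partition dominated by `gam e` is dominated by `e`. -/
lemma dom_of_dom_gam (hs : Special n e) {f : ℕ → ℕ} (hsf : Special n f)
    (h : Dom f (gam e)) : Dom f e := by
  constructor
  · rw [hsf.2.2, hs.2.2]
  · have hd : ∀ k, psum f k ≤ Pf e k := by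
      intro k
      have := h.2 k
      rwa [psum_gam hs] at this
    exact psum_le_Y hs hsf.1 hd

lemma mSP_injective {e₁ e₂ : ℕ → ℕ} (hs1 : Special n e₁) (hs2 : Special n e₂)
    (h : mSP e₁ = mSP e₂) : e₁ = e₂ := by
  have hg : gam e₁ = gam e₂ := by
    rw [← mSP_eq_gam hs1, ← mSP_eq_gam hs2, h]
  have h1 : Dom e₂ e₁ := by
    apply dom_of_dom_gam hs1 hs2
    rw [hg]
    exact dom_e_gam hs2
  have h2 : Dom e₁ e₂ := by
    apply dom_of_dom_gam hs2 hs1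
    rw [← hg]
    exact dom_e_gam hs1
  exact dom_antisymm h2 h1

/-! ### Finiteness and counting -/

lemma part_le_size {f : ℕ → ℕ} (hf : IsPartition f) {s : ℕ} (hsz : size f = s) (i : ℕ) :
    f i ≤ s := by
  obtain ⟨N, hN⟩ := hf.2
  have h1 : psum f (i+1) ≤ size f := psum_le_size hN (i+1)
  have h2 : psum f (i+1) = psum f i + f i := psum_succ f i
  omega

lemma part_zero_of_ge {f : ℕ → ℕ} (hf : IsPartition f) {s : ℕ} (hsz : size f = s) {i : ℕ}
    (hi : s ≤ i) : f i = 0 := by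
  obtain ⟨N, hN⟩ := hf.2
  by_contra hpos
  have hall : ∀ t, t ≤ i → 1 ≤ f t := fun t ht => by
    have := hf.1 ht
    omega
  have h1 : (i+1) ≤ psum f (i+1) := by
    unfold psum
    calc (i+1) = ∑ _t ∈ Finset.range (i+1), 1 := by simp
    _ ≤ ∑ t ∈ Finset.range (i+1), f t :=
      Finset.sum_le_sum (fun t ht => hall t (by simp at ht; omega))
  have h2 : psum f (i+1) ≤ size f := psum_le_size hN (i+1)
  omega

lemma finite_partitions (n : ℕ) : {f : ℕ → ℕ | IsPartition f ∧ size f = 2 * n}.Finite := by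
  classical
  set Φ : (ℕ → ℕ) → (Fin (2*n+1) → Fin (2*n+1)) :=
    fun f i => ⟨min (f i.val) (2*n), by omega⟩ with hΦ
  apply Set.Finite.of_finite_image (f := Φ)
  · exact Set.toFinite _
  · intro f hf g hg hfg
    simp only [Set.mem_setOf_eq] at hf hg
    funext i
    rcases le_or_gt i (2*n) with hi | hi
    · have := congrFun hfg ⟨i, by omega⟩
      simp only [hΦ, Fin.mk.injEq] at this
      have h1 : f i ≤ 2*n := part_le_size hf.1 hf.2 i
      have h2 : g i ≤ 2*n := part_le_size hg.1 hg.2 i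
      omega
    · rw [part_zero_of_ge hf.1 hf.2 (by omega), part_zero_of_ge hg.1 hg.2 (by omega)]

/-! ### the two sets -/

lemma domain_eq_special (n : ℕ) :
    {e : ℕ → ℕ | IsTypeD e ∧ IsTypeC (transpose e) ∧ size e = 2 * n}
      = {e : ℕ → ℕ | Special n e} := rfl

lemma special_transpose_target {e : ℕ → ℕ} (hs : Special n e) :
    IsTypeC (transpose e) ∧ IsTypeD (transpose (transpose e)) ∧ size (transpose e) = 2 * n := by
  refine ⟨hs.2.1, ?_, ?_⟩
  · rw [transpose_transpose hs.1.1]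
    exact hs.1
  · rw [size_transpose hs.1.1]
    exact hs.2.2

lemma target_transpose_special {c : ℕ → ℕ}
    (hc : IsTypeC c ∧ IsTypeD (transpose c) ∧ size c = 2 * n) :
    Special n (transpose c) := by
  refine ⟨hc.2.1, ?_, ?_⟩
  · rw [transpose_transpose hc.1.1]
    exact hc.1
  · rw [size_transpose hc.1.1]
    exact hc.2.2

end Stmt4
/-- `d̃_SP(e) := C-collapse of (e⁺)⁻` is a bijection from the set
of special type-D partitions of size `2n` onto the set of metaplectic special
partitions of size `2n`. -/
theorem stmt_4 (n : ℕ) :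
    Set.BijOn mSP
      {e : ℕ → ℕ | IsTypeD e ∧ IsTypeC (transpose e) ∧ size e = 2 * n}
      {c : ℕ → ℕ | IsTypeC c ∧ IsTypeD (transpose c) ∧ size c = 2 * n} := by
  set A := {e : ℕ → ℕ | IsTypeD e ∧ IsTypeC (transpose e) ∧ size e = 2 * n} with hA
  set B := {c : ℕ → ℕ | IsTypeC c ∧ IsTypeD (transpose c) ∧ size c = 2 * n} with hB
  have hmem : ∀ e, e ∈ A → Stmt4.Special n e := fun e he => he
  have hmaps : Set.MapsTo mSP A B := by
    intro e he
    have hs := hmem e he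
    have hg := Stmt4.mSP_eq_gam hs
    show IsTypeC (mSP e) ∧ IsTypeD (transpose (mSP e)) ∧ size (mSP e) = 2 * n
    rw [hg]
    exact ⟨Stmt4.typeC_gam hs, Stmt4.typeD_transpose_gam hs, Stmt4.size_gam hs⟩
  have hinj : Set.InjOn mSP A := fun a ha b hb h =>
    Stmt4.mSP_injective (hmem a ha) (hmem b hb) h
  have hBfin : B.Finite := by
    apply Set.Finite.subset (Stmt4.finite_partitions n)
    intro c hc
    exact ⟨hc.1.1, hc.2.2⟩
  have htrans_img : transpose '' A = B := by
    ext c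
    constructor
    · rintro ⟨e, he, rfl⟩
      exact Stmt4.special_transpose_target (hmem e he)
    · intro hc
      refine ⟨transpose c, Stmt4.target_transpose_special hc, ?_⟩
      exact Stmt4.transpose_transpose hc.1.1
  have htrans_inj : Set.InjOn transpose A := by
    intro a ha b hb h
    have h1 : transpose (transpose a) = transpose (transpose b) := by rw [h]
    rwa [Stmt4.transpose_transpose (hmem a ha).1.1,
      Stmt4.transpose_transpose (hmem b hb).1.1] at h1
  have himg : mSP '' A = B := by
    refine Set.eq_of_subset_of_ncard_le (Set.mapsTo_iff_image_subset.1 hmaps) ?_ hBfin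
    rw [Set.ncard_image_of_injOn hinj, ← htrans_img,
      Set.ncard_image_of_injOn htrans_inj]
  exact ⟨hmaps, hinj, fun b hb => by rw [← himg] at hb; exact hb⟩
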